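/- Let ι be a finite index set, σ : ι → ℚ with σ_i ≥ 0 for all i, and let r and M be positive integers. Let S ⊆ ℝ be the set of all real numbers of the form (Σ_{i ∈ ι} σ_i · (k_i / r!)) / (Σ_{i ∈ ι} σ_i · m_i), where k : ι → ℤ is arbitrary and m : ι → ℤ satisfies 1 ≤ m_i ≤ M for all i and Σ_{i ∈ ι} σ_i m_i ≠ 0. Then S is a discrete subset of ℝ; in particular, S ∩ B is finite for every bounded subset B ⊆ ℝ. -/

import Mathlib

lemma rat_mul_den_dvd (q : ℚ) (c : ℕ) (h : q.den ∣ c) : ∃ n : ℤ, (q * c : ℚ) = n := by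
  obtain ⟨t, rfl⟩ := h
  refine ⟨q.num * t, ?_⟩
  have hden : ((q.den : ℚ)) ≠ 0 := by positivity
  have h1 : (q.num : ℚ) = q * q.den := (div_eq_iff hden).mp (Rat.num_div_den q)
  push_cast
  rw [← mul_assoc, ← h1]

lemma key_lattice (C : ℝ) (hC : 0 < C) (S : Set ℝ)
    (hST : ∀ x ∈ S, ∃ n : ℤ, x = n / C) :
    DiscreteTopology S ∧ ∀ B : Set ℝ, Bornology.IsBounded B → (S ∩ B).Finite := by
  constructor
  · rw [discreteTopology_iff_isOpen_singleton]
    rintro ⟨x, hx⟩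
    obtain ⟨n, rfl⟩ := hST x hx
    have hset : ({⟨(n : ℝ) / C, hx⟩} : Set S) =
        Subtype.val ⁻¹' (Metric.ball ((n : ℝ) / C) (1 / C)) := by
      ext ⟨y, hy⟩
      simp only [Set.mem_singleton_iff, Set.mem_preimage, Metric.mem_ball, Subtype.mk_eq_mk]
      constructor
      · rintro rfl; simpa [Real.dist_eq] using by positivity
      · intro hlt
        obtain ⟨m, rfl⟩ := hST y hy
        have habs : |(m : ℝ) - n| < 1 := by
          rw [Real.dist_eq] at hlt
          have heq : |(m : ℝ) / C - (n : ℝ) / C| = |(m : ℝ) - n| / C := by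
            rw [div_sub_div_same, abs_div, abs_of_pos hC]
          rw [heq, div_lt_div_iff₀ hC hC, one_mul] at hlt
          nlinarith [abs_nonneg ((m:ℝ) - n)]
        have hz : |m - n| < 1 := by exact_mod_cast (by push_cast; exact habs : |((m - n : ℤ) : ℝ)| < 1)
        have := abs_lt.mp hz; have : m = n := by omega
        rw [this]
    rw [hset]
    exact Metric.isOpen_ball.preimage continuous_subtype_val
  · intro B hB
    obtain ⟨R, hR⟩ := hB.subset_closedBall 0
    apply Set.Finite.subset (Set.Finite.image (fun n : ℤ => (n : ℝ) / C)
      (Set.finite_Icc (-⌈C * R⌉) ⌈C * R⌉))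
    rintro x ⟨hxS, hxB⟩
    obtain ⟨n, rfl⟩ := hST x hxS
    refine ⟨n, ?_, rfl⟩
    have hx : |(n : ℝ) / C| ≤ R := by
      have := hR hxB
      rwa [Metric.mem_closedBall, Real.dist_eq, sub_zero] at this
    have hb : |(n : ℝ)| ≤ C * R := by
      rw [abs_div, abs_of_pos hC, div_le_iff₀ hC] at hx
      linarith [hx]
    have h2 : |(n : ℝ)| ≤ (⌈C * R⌉ : ℝ) := hb.trans (Int.le_ceil _)
    have h3 := abs_le.mp h2
    constructor
    · exact_mod_cast h3.1
    · exact_mod_cast h3.2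

theorem discrete_beta_values (ι : Type*) [Fintype ι] (σ : ι → ℚ) (hσ : ∀ i, 0 ≤ σ i)
    (r M : ℕ) (hr : 0 < r) (hM : 0 < M) (S : Set ℝ)
    (hS : S = {x : ℝ | ∃ (kk : ι → ℤ) (m : ι → ℤ),
      (∀ i, 1 ≤ m i ∧ m i ≤ (M : ℤ)) ∧ (∑ i, (σ i : ℝ) * (m i : ℝ)) ≠ 0 ∧
      x = (∑ i, (σ i : ℝ) * ((kk i : ℝ) / (Nat.factorial r : ℝ)))
            / (∑ i, (σ i : ℝ) * (m i : ℝ))}) :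
    DiscreteTopology S ∧ ∀ B : Set ℝ, Bornology.IsBounded B → (S ∩ B).Finite := by
  classical
  set c : ℕ := ∏ i, (σ i).den with hc_def
  have hc0 : 0 < c := Finset.prod_pos fun i _ => (σ i).den_pos
  have hdvd : ∀ i : ι, (σ i).den ∣ c := fun i => Finset.dvd_prod_of_mem _ (Finset.mem_univ i)
  choose a ha using fun i => rat_mul_den_dvd (σ i) c (hdvd i)
  have haR : ∀ i, (a i : ℝ) = (σ i : ℝ) * c := fun i => by exact_mod_cast (ha i).symm
  have hσle : ∀ i, σ i ≤ ((σ i).num : ℚ) := by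
    intro i
    conv_lhs => rw [← Rat.num_div_den (σ i)]
    apply div_le_self
    · exact_mod_cast Rat.num_nonneg.mpr (hσ i)
    · exact_mod_cast (σ i).den_pos
  have ha0 : ∀ i, 0 ≤ a i := by
    intro i
    have h : (0:ℚ) ≤ (a i : ℚ) := (ha i) ▸ mul_nonneg (hσ i) (by positivity)
    exact_mod_cast h
  have hale : ∀ i, a i ≤ ((σ i).num.natAbs : ℤ) * c := by
    intro i
    have hnn : ((σ i).num.natAbs : ℤ) = (σ i).num :=
      Int.natAbs_of_nonneg (Rat.num_nonneg.mpr (hσ i))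
    rw [hnn]
    have h : (a i : ℚ) ≤ ((σ i).num * c : ℚ) := by
      rw [← ha i]
      exact mul_le_mul_of_nonneg_right (hσle i) (by positivity)
    exact_mod_cast h
  set A : ℕ := (∑ i, (σ i).num.natAbs) * c * M with hA_def
  set C : ℝ := ((r.factorial * A.factorial : ℕ) : ℝ) with hC_def
  have hC0 : 0 < C := by
    rw [hC_def]
    exact_mod_cast Nat.mul_pos r.factorial_pos A.factorial_pos
  apply key_lattice C hC0
  intro x hx
  rw [hS] at hx
  obtain ⟨kk, m, hm, hQne, hxeq⟩ := hx
  set Q : ℤ := ∑ i, a i * m i with hQ_def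
  set P : ℤ := ∑ i, a i * kk i with hP_def
  have hQR : (Q : ℝ) = (∑ i, (σ i:ℝ) * (m i : ℝ)) * c := by
    rw [hQ_def, Finset.sum_mul]
    push_cast
    exact Finset.sum_congr rfl fun i _ => by rw [haR i]; ring
  have hPR : (P : ℝ) = (∑ i, (σ i:ℝ) * (kk i : ℝ)) * c := by
    rw [hP_def, Finset.sum_mul]
    push_cast
    exact Finset.sum_congr rfl fun i _ => by rw [haR i]; ring
  have hcR : (c : ℝ) ≠ 0 := by positivity
  have hQ0 : Q ≠ 0 := by
    intro h
    apply hQne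
    have := hQR
    rw [h] at this
    simpa [hcR] using this.symm
  have hQle : Q.natAbs ≤ A := by
    have h1 : |Q| ≤ (A : ℤ) := by
      calc |Q| ≤ ∑ i, |a i * m i| := Finset.abs_sum_le_sum_abs _ _
        _ ≤ ∑ i, ((σ i).num.natAbs : ℤ) * c * M := by
            refine Finset.sum_le_sum fun i _ => ?_
            rw [abs_mul]
            have hm1 := (hm i).1
            have hm2 := (hm i).2
            have hma : |m i| ≤ (M : ℤ) := abs_le.mpr ⟨by omega, hm2⟩
            have haa : |a i| ≤ ((σ i).num.natAbs : ℤ) * c := by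
              rw [abs_of_nonneg (ha0 i)]; exact hale i
            exact mul_le_mul haa hma (abs_nonneg _) (by positivity)
        _ = (A : ℤ) := by rw [hA_def]; push_cast; rw [Finset.sum_mul, Finset.sum_mul]
    rw [Int.abs_eq_natAbs] at h1
    exact_mod_cast h1
  have hdvdQ : Q ∣ (A.factorial : ℤ) := by
    rw [← Int.natAbs_dvd]
    exact_mod_cast Nat.dvd_factorial (Int.natAbs_pos.mpr hQ0) hQle
  obtain ⟨s, hs⟩ := hdvdQ
  have hs0 : (s : ℝ) ≠ 0 := by
    have : s ≠ 0 := by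
      intro h
      rw [h, mul_zero] at hs
      exact_mod_cast absurd hs (by exact_mod_cast A.factorial_ne_zero)
    exact_mod_cast this
  refine ⟨P * s, ?_⟩
  have h1 : (∑ i, (σ i:ℝ) * ((kk i:ℝ) / (r.factorial : ℝ)))
      = (∑ i, (σ i:ℝ) * (kk i : ℝ)) / (r.factorial : ℝ) := by
    rw [Finset.sum_div]
    exact Finset.sum_congr rfl fun i _ => (mul_div_assoc _ _ _).symm
  have hD : (∑ i, (σ i:ℝ) * (m i : ℝ)) = (Q:ℝ)/c := by rw [hQR]; field_simp
  have hN : (∑ i, (σ i:ℝ) * (kk i : ℝ)) = (P:ℝ)/c := by rw [hPR]; field_simp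
  have hsR : ((A.factorial : ℕ) : ℝ) = (Q:ℝ) * s := by exact_mod_cast hs
  have hQR0 : (Q : ℝ) ≠ 0 := by exact_mod_cast hQ0
  have hrR : ((r.factorial : ℕ) : ℝ) ≠ 0 := by exact_mod_cast r.factorial_ne_zero
  rw [hxeq, h1, hD, hN, hC_def]
  push_cast
  rw [hsR]
  field_simp
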